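/- Assume condition (∗). If every ω*-sequence in I is trivial, then the disjoint union X = ⋃_{i∈I} X_i is reversible. -/
import Mathlib


universe u v w

section Defs

variable {α : Type*} {β : Type*}

/-- `f` is a homomorphism from `⟨α, r⟩` to `⟨β, s⟩`. -/
def IsHom (r : α → α → Prop) (s : β → β → Prop) (f : α → β) : Prop :=
  ∀ x y, r x y → s (f x) (f y)

/-- A condensation is a bijective homomorphism. -/
def IsCond (r : α → α → Prop) (s : β → β → Prop) (f : α → β) : Prop :=
  Function.Bijective f ∧ IsHom r s f

/-- A monomorphism is an injective homomorphism. -/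
def IsMono (r : α → α → Prop) (s : β → β → Prop) (f : α → β) : Prop :=
  Function.Injective f ∧ IsHom r s f

/-- An isomorphism of binary structures. -/
def IsIso (r : α → α → Prop) (s : β → β → Prop) (f : α → β) : Prop :=
  Function.Bijective f ∧ ∀ x y, r x y ↔ s (f x) (f y)

/-- A binary structure is reversible iff every self-condensation is an automorphism. -/
def Reversible (r : α → α → Prop) : Prop :=
  ∀ f : α → α, IsCond r r f → IsIso r r f

/-- A binary structure is connected iff it has exactly one component: it is nonempty and
the least equivalence relation containing `r` relates any two points. -/
def Connected (r : α → α → Prop) : Prop :=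
  Nonempty α ∧ ∀ x y, Relation.EqvGen r x y

/-- The relation of the disjoint union of the structures `⟨X i, R i⟩`. -/
def unionRel {I : Type*} {X : I → Type*} (R : ∀ i, X i → X i → Prop) :
    (Σ i, X i) → (Σ i, X i) → Prop :=
  fun a b => ∃ h : a.1 = b.1, R b.1 (h ▸ a.2) b.2

end Defs

section Aux

/-- Transport along an equality of indices. -/
def castX {I : Type*} (X : I → Type*) {i j : I} (h : i = j) : X i → X j :=
  fun x => h ▸ x

lemma castX_mono {I : Type*} {X : I → Type*} (R : ∀ i, X i → X i → Prop) {i j : I}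
    (h : i = j) : IsMono (R i) (R j) (castX X h) := by
  subst h; exact ⟨fun a b hh => hh, fun x y hh => hh⟩

lemma castX_hom {I : Type*} {X : I → Type*} (R : ∀ i, X i → X i → Prop) {i j : I}
    (h : i = j) : IsHom (R i) (R j) (castX X h) := by
  subst h; exact fun x y hh => hh

lemma castX_bij {I : Type*} (X : I → Type*) {i j : I} (h : i = j) :
    Function.Bijective (castX X h) := by
  subst h; exact Function.bijective_id

lemma sigma_mk_cast {I : Type*} {X : I → Type*} (p : Σ i, X i) {j : I} (h : p.1 = j) :
    p = ⟨j, castX X h p.2⟩ := by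
  obtain ⟨a, b⟩ := p
  subst h
  rfl

lemma isHom_comp {α β γ : Type*} {r : α → α → Prop} {s : β → β → Prop} {t : γ → γ → Prop}
    {F : α → β} {G : β → γ} (hF : IsHom r s F) (hG : IsHom s t G) : IsHom r t (G ∘ F) :=
  fun x y h => hG _ _ (hF _ _ h)

lemma isMono_comp {α β γ : Type*} {r : α → α → Prop} {s : β → β → Prop} {t : γ → γ → Prop}
    {F : α → β} {G : β → γ} (hF : IsMono r s F) (hG : IsMono s t G) : IsMono r t (G ∘ F) :=
  ⟨hG.1.comp hF.1, isHom_comp hF.2 hG.2⟩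

lemma iso_transfer {I : Type*} {X : I → Type*} (R : ∀ i, X i → X i → Prop) {j j' k k' : I}
    (h1 : j = j') (h2 : k = k') (F : X j' → X k')
    (hF : IsIso (R j) (R k) (castX X h2.symm ∘ F ∘ castX X h1)) : IsIso (R j') (R k') F := by
  subst h1; subst h2; exact hF

/-- The key combinatorial chain lemma: if `σ` is surjective, `Z` is forward closed,
`a ∉ Z` but `σ a ∈ Z`, then there is an injective backward `σ`-chain starting at `a`
avoiding `Z`. -/
lemma chain_lemma {I : Type*} {σ : I → I} (hsur : Function.Surjective σ)
    {Z : Set I} (hZ : ∀ x ∈ Z, σ x ∈ Z) {a : I} (ha : a ∉ Z) (haZ : σ a ∈ Z) :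
    ∃ g : ℕ → I, Function.Injective g ∧ g 0 = a ∧ (∀ k, σ (g (k+1)) = g k) ∧ ∀ k, g k ∉ Z := by
  classical
  choose τ hτ using hsur
  let g : ℕ → I := fun n => τ^[n] a
  have hg0 : g 0 = a := rfl
  have hlink : ∀ k, σ (g (k+1)) = g k := by
    intro k
    show σ (τ^[k+1] a) = τ^[k] a
    rw [Function.iterate_succ_apply']
    exact hτ _
  have hnotZ : ∀ k, g k ∉ Z := by
    intro k
    induction k with
    | zero => exact ha
    | succ n ih =>
      intro hmem
      exact ih (hlink n ▸ hZ _ hmem)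
  have hback : ∀ m n, σ^[m] (g (m + n)) = g n := by
    intro m
    induction m with
    | zero => intro n; simp
    | succ m ih =>
      intro n
      have h1 : m + 1 + n = (m + n) + 1 := by omega
      rw [h1, Function.iterate_succ_apply, hlink]
      exact ih n
  have hiterZ : ∀ (t : ℕ) (x : I), x ∈ Z → σ^[t] x ∈ Z := by
    intro t
    induction t with
    | zero => intro x h; exact h
    | succ t ih =>
      intro x h
      rw [Function.iterate_succ_apply]
      exact ih _ (hZ _ h)
  have hinj : Function.Injective g := by
    have key : ∀ m n, m < n → g m ≠ g n := by
      intro m n hmn heq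
      have hqpos : 0 < n - m := by omega
      have hn : n = (n - m) + m := by omega
      have hper : σ^[n-m] (g n) = g n := by
        have h5 := hback (n - m) m
        rw [← hn] at h5
        rw [h5]
        exact heq
      have h2 : σ^[m] (g m) = a := by
        have h := hback m 0
        rw [Nat.add_zero] at h
        exact h
      have hmem : σ^[m+1] (g n) ∈ Z := by
        have h3 : σ^[m+1] (g n) = σ a := by
          rw [← heq, Function.iterate_succ_apply', h2]
        rw [h3]
        exact haZ
      have pump : ∀ t, σ^[(n-m) * t] (g n) = g n := by
        intro t
        induction t with
        | zero => simp
        | succ t ih =>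
          rw [Nat.mul_succ, Function.iterate_add_apply, hper]
          exact ih
      have hle : m + 1 ≤ (n - m) * (m + 1) := by
        have h6 := Nat.mul_le_mul_right (m+1) hqpos
        simpa using h6
      have hfin : g n ∈ Z := by
        have h4 : (n - m) * (m + 1) = ((n - m) * (m + 1) - (m + 1)) + (m + 1) := by omega
        have h5 := pump (m + 1)
        rw [h4, Function.iterate_add_apply] at h5
        rw [← h5]
        exact hiterZ _ _ hmem
      exact hnotZ n hfin
    intro m n h
    rcases lt_trichotomy m n with h1 | h1 | h1
    · exact absurd h (key m n h1)
    · exact h1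
    · exact absurd h.symm (key n m h1)
  exact ⟨g, hinj, hg0, hlink, hnotZ⟩

end Aux

/-- **Theorem (Statement 7).** Under condition (∗) — `⟨X i, R i⟩`, `i ∈ I`, pairwise disjoint
(realized by a sigma type), connected and reversible binary structures — if every ω*-sequence
in `I` (an injection `g : ω → I` such that `X (g l)` maps monomorphically into `X (g k)` for
all `k < l`) is trivial (every monomorphism from `X (g 1)` to `X (g 0)` is an isomorphism),
then the disjoint union `⋃_{i∈I} X i` is reversible. -/
theorem stmt7 {I : Type u} {X : I → Type v} (R : ∀ i, X i → X i → Prop)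
    (hconn : ∀ i, Connected (R i)) (hrev : ∀ i, Reversible (R i))
    (htriv : ∀ g : ℕ → I,
      Function.Injective g →
      (∀ k l : ℕ, k < l → ∃ F : X (g l) → X (g k), IsMono (R (g l)) (R (g k)) F) →
      ∀ F : X (g 1) → X (g 0), IsMono (R (g 1)) (R (g 0)) F → IsIso (R (g 1)) (R (g 0)) F) :
    Reversible (unionRel R) := by
  classical
  intro f hf
  obtain ⟨hbij, hhom⟩ := hf
  let x0 : ∀ i, X i := fun i => (hconn i).1.some
  have key : ∀ i (x y : X i), Relation.EqvGen (R i) x y → (f ⟨i,x⟩).1 = (f ⟨i,y⟩).1 := by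
    intro i x y h
    induction h with
    | rel u v huv =>
      obtain ⟨h, _⟩ := hhom ⟨i,u⟩ ⟨i,v⟩ ⟨rfl, huv⟩
      exact h
    | refl u => rfl
    | symm u v _ ih => exact ih.symm
    | trans u v w _ _ ih1 ih2 => exact ih1.trans ih2
  let σ : I → I := fun i => (f ⟨i, x0 i⟩).1
  have hσ : ∀ i (x : X i), (f ⟨i,x⟩).1 = σ i := fun i x =>
    key i x (x0 i) ((hconn i).2 x (x0 i))
  let fi : ∀ i, X i → X (σ i) := fun i x => castX X (hσ i x) (f ⟨i,x⟩).2
  have hFi : ∀ i (x : X i), f ⟨i,x⟩ = ⟨σ i, fi i x⟩ := fun i x =>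
    sigma_mk_cast (f ⟨i,x⟩) (hσ i x)
  have fiInj : ∀ i, Function.Injective (fi i) := by
    intro i x y h
    have h1 : f ⟨i,x⟩ = f ⟨i,y⟩ := by rw [hFi i x, hFi i y, h]
    exact sigma_mk_injective (hbij.1 h1)
  have fiHom : ∀ i, IsHom (R i) (R (σ i)) (fi i) := by
    intro i x y hxy
    have h1 : unionRel R (f ⟨i,x⟩) (f ⟨i,y⟩) := hhom _ _ ⟨rfl, hxy⟩
    rw [hFi i x, hFi i y] at h1
    obtain ⟨h2, h3⟩ := h1
    exact h3
  have fiMono : ∀ i, IsMono (R i) (R (σ i)) (fi i) := fun i => ⟨fiInj i, fiHom i⟩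
  have σsur : Function.Surjective σ := by
    intro j
    obtain ⟨⟨i, x⟩, hp⟩ := hbij.2 ⟨j, x0 j⟩
    rw [hFi i x] at hp
    have hfst := congrArg Sigma.fst hp
    exact ⟨i, hfst⟩
  have monoChain : ∀ (G : ℕ → I), (∀ k, σ (G (k+1)) = G k) → ∀ k l, k < l →
      ∃ Fm : X (G l) → X (G k), IsMono (R (G l)) (R (G k)) Fm := by
    intro G hlink k l hkl
    induction l, hkl using Nat.le_induction with
    | base =>
      exact ⟨castX X (hlink k) ∘ fi (G (k+1)),
        isMono_comp (fiMono _) (castX_mono R _)⟩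
    | succ m hm ih =>
      obtain ⟨Fm, hFm⟩ := ih
      exact ⟨Fm ∘ (castX X (hlink m) ∘ fi (G (m+1))),
        isMono_comp (isMono_comp (fiMono _) (castX_mono R _)) hFm⟩
  have σinj : Function.Injective σ := by
    intro a b hab
    by_contra hne
    set j := σ a with hj
    set Z : Set I := {x | ∃ n, σ^[n] j = x} with hZdef
    have hZfwd : ∀ x ∈ Z, σ x ∈ Z := by
      rintro x ⟨n, rfl⟩
      exact ⟨n+1, Function.iterate_succ_apply' σ n j⟩
    have hjZ : j ∈ Z := ⟨0, rfl⟩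
    have main : ∀ c d : I, σ c = j → σ d = j → c ∉ Z → c ≠ d → False := by
      intro c d hc hd hcZ hcd
      obtain ⟨g, ginj, hg0, glink, gnotZ⟩ :=
        chain_lemma σsur hZfwd hcZ (show σ c ∈ Z by rw [hc]; exact hjZ)
      let G : ℕ → I := fun n => match n with | 0 => j | (k+1) => g k
      have hGlink : ∀ k, σ (G (k+1)) = G k := by
        intro k
        cases k with
        | zero => show σ (g 0) = j; rw [hg0]; exact hc
        | succ m => exact glink m
      have hGinj : Function.Injective G := by
        intro m n h
        cases m with
        | zero =>
          cases n with
          | zero => rfl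
          | succ n =>
            exact absurd (show g n ∈ Z from (show j = g n from h) ▸ hjZ) (gnotZ n)
        | succ m =>
          cases n with
          | zero =>
            exact absurd (show g m ∈ Z from (show g m = j from h).symm ▸ hjZ) (gnotZ m)
          | succ n => exact congrArg Nat.succ (ginj h)
      have Ht := htriv G hGinj (monoChain G hGlink)
      have hW : IsMono (R (G 1)) (R (G 0))
          (castX X (show σ c = G 0 from hc) ∘ (fi c ∘ castX X (show G 1 = c from hg0))) :=
        isMono_comp (isMono_comp (castX_mono R _) (fiMono c)) (castX_mono R _)
      have hiso := Ht _ hW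
      obtain ⟨z, hz⟩ := hiso.1.2 (castX X hd (fi d (x0 d)))
      have e1 : f ⟨c, castX X (show G 1 = c from hg0) z⟩ = f ⟨d, x0 d⟩ := by
        rw [hFi, hFi]
        have h1 : (⟨σ c, fi c (castX X (show G 1 = c from hg0) z)⟩ : Σ i, X i)
            = ⟨j, castX X hc (fi c (castX X (show G 1 = c from hg0) z))⟩ :=
          sigma_mk_cast (⟨σ c, fi c (castX X (show G 1 = c from hg0) z)⟩ : Σ i, X i) hc
        have h2 : (⟨σ d, fi d (x0 d)⟩ : Σ i, X i)
            = ⟨j, castX X hd (fi d (x0 d))⟩ :=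
          sigma_mk_cast (⟨σ d, fi d (x0 d)⟩ : Σ i, X i) hd
        rw [h1, h2]
        exact congrArg (Sigma.mk j) hz
      exact hcd (congrArg Sigma.fst (hbij.1 e1))
    rcases Classical.em (a ∈ Z) with haZ | haZ
    · have hbZ : b ∉ Z := by
        intro hbZ
        obtain ⟨m, hm⟩ := haZ
        obtain ⟨n, hn⟩ := hbZ
        have hma : σ^[m+1] j = j := by
          rw [Function.iterate_succ_apply', hm]
        have hnb : σ^[n+1] j = j := by
          rw [Function.iterate_succ_apply', hn, ← hab]
        have hcontr : a = b := by
          calc a = σ^[m] j := hm.symm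
          _ = σ^[m] (σ^[n+1] j) := by rw [hnb]
          _ = σ^[m + (n+1)] j := (Function.iterate_add_apply σ m (n+1) j).symm
          _ = σ^[n + (m+1)] j := by rw [show m + (n+1) = n + (m+1) from by omega]
          _ = σ^[n] (σ^[m+1] j) := Function.iterate_add_apply σ n (m+1) j
          _ = σ^[n] j := by rw [hma]
          _ = b := hn
        exact hne hcontr
      exact main b a (by rw [← hab]) hj.symm hbZ (Ne.symm hne)
    · exact main a b hj.symm (by rw [← hab]) haZ hne
  have fiSurj : ∀ i, Function.Surjective (fi i) := by
    intro i y
    obtain ⟨⟨i', x⟩, hp⟩ := hbij.2 ⟨σ i, y⟩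
    rw [hFi i' x] at hp
    have hfst := congrArg Sigma.fst hp
    have h1 : i' = i := σinj hfst
    subst h1
    exact ⟨x, sigma_mk_injective hp⟩
  have fiBij : ∀ i, Function.Bijective (fi i) := fun i => ⟨fiInj i, fiSurj i⟩
  let E : I ≃ I := Equiv.ofBijective σ ⟨σinj, σsur⟩
  have fiIso : ∀ i, IsIso (R i) (R (σ i)) (fi i) := by
    intro i
    by_cases hper : ∃ p, 0 < p ∧ σ^[p] i = i
    · obtain ⟨p, hppos, hpi⟩ := hper
      obtain ⟨q, rfl⟩ : ∃ q, p = q + 1 := ⟨p - 1, by omega⟩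
      have orb : ∀ (n : ℕ) (j : I), ∃ K : X j → X (σ^[n] j),
          Function.Bijective K ∧ IsHom (R j) (R (σ^[n] j)) K := by
        intro n
        induction n with
        | zero => intro j; exact ⟨id, Function.bijective_id, fun x y h => h⟩
        | succ n ih =>
          intro j
          obtain ⟨K, hKb, hKh⟩ := ih j
          refine ⟨castX X (Function.iterate_succ_apply' σ n j).symm ∘ (fi (σ^[n] j) ∘ K),
            ?_, ?_⟩
          · exact (castX_bij X _).comp ((fiBij _).comp hKb)
          · exact isHom_comp (isHom_comp hKh (fiHom _)) (castX_hom R _)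
      obtain ⟨K, hKb, hKh⟩ := orb q (σ i)
      have e : σ^[q] (σ i) = i := by
        rw [← Function.iterate_succ_apply]
        exact hpi
      have hcond : IsCond (R i) (R i) (castX X e ∘ (K ∘ fi i)) :=
        ⟨(castX_bij X e).comp (hKb.comp (fiBij i)),
          isHom_comp (isHom_comp (fiHom i) hKh) (castX_hom R e)⟩
      have hiso := hrev i _ hcond
      refine ⟨fiBij i, fun x y => ⟨fun h => fiHom i x y h, fun h => ?_⟩⟩
      have h2 := castX_hom R e _ _ (hKh _ _ h)
      exact (hiso.2 x y).mpr h2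
    · let τ : I → I := fun x => E.symm x
      have hστ : ∀ x, σ (τ x) = x := fun x => E.apply_symm_apply x
      have hτσ : ∀ x, τ (σ x) = x := fun x => E.symm_apply_apply x
      have scancel : ∀ (t : ℕ) (y : I), σ^[t] (τ^[t] y) = y := by
        intro t
        induction t with
        | zero => intro y; rfl
        | succ t ih =>
          intro y
          rw [Function.iterate_succ_apply σ, Function.iterate_succ_apply' τ, hστ]
          exact ih y
      let G : ℕ → I := fun k => τ^[k] (σ i)
      have hGlink : ∀ k, σ (G (k+1)) = G k := by
        intro k
        show σ (τ^[k+1] (σ i)) = τ^[k] (σ i)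
        rw [Function.iterate_succ_apply' τ]
        exact hστ _
      have hG1 : G 1 = i := by
        show τ^[1] (σ i) = i
        rw [Function.iterate_one]
        exact hτσ i
      have hGinj : Function.Injective G := by
        have key2 : ∀ m n, m < n → G m ≠ G n := by
          intro m n hmn heq
          have hq : 0 < n - m := by omega
          have h1 : τ^[m] (σ i) = τ^[m] (τ^[n - m] (σ i)) := by
            show G m = _
            rw [heq]
            show τ^[n] (σ i) = τ^[m] (τ^[n-m] (σ i))
            rw [← Function.iterate_add_apply]
            congr 1
            omega
          have h2 : σ i = τ^[n-m] (σ i) :=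
            (show Function.Injective τ from E.symm.injective).iterate m h1
          have h3 : σ^[n-m] (σ i) = σ i := by
            calc σ^[n-m] (σ i) = σ^[n-m] (τ^[n-m] (σ i)) := by rw [← h2]
            _ = σ i := scancel _ _
          have h4 : σ (σ^[n-m] i) = σ i := by
            rw [← Function.iterate_succ_apply' σ, Function.iterate_succ_apply σ]
            exact h3
          exact hper ⟨n - m, hq, σinj h4⟩
        intro m n h
        rcases lt_trichotomy m n with h1 | h1 | h1
        · exact absurd h (key2 m n h1)
        · exact h1
        · exact absurd h.symm (key2 n m h1)
      have Ht := htriv G hGinj (monoChain G hGlink)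
      have hW : IsMono (R (G 1)) (R (G 0))
          (castX X (Eq.symm (show G 0 = σ i from rfl)) ∘ (fi i ∘ castX X hG1)) :=
        isMono_comp (isMono_comp (castX_mono R _) (fiMono i)) (castX_mono R _)
      exact iso_transfer R hG1 (show G 0 = σ i from rfl) (fi i) (Ht _ hW)
  refine ⟨hbij, ?_⟩
  rintro ⟨ia, xa⟩ ⟨ib, xb⟩
  refine ⟨fun h => hhom _ _ h, fun h => ?_⟩
  rw [hFi ia xa, hFi ib xb] at h
  obtain ⟨h1, h2⟩ := h
  have hii : ia = ib := σinj h1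
  subst hii
  exact ⟨rfl, ((fiIso ia).2 xa xb).mpr h2⟩
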